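/- Let A = ℤ[√−5] = {a + b√−5 : a, b ∈ ℤ}. Then for every integer m ≥ 1, the ideal I^A_{2^m} equals the ideal of A generated by 2 and √−5 − 1, and this ideal is not a principal ideal. -/

import Mathlib

/-- `I^A_{p^m}`: the ideal of `A` generated by `p` together with all elements
of the form `a - a ^ (p ^ m)` for `a ∈ A`. -/
def Iideal (p m : ℕ) (A : Type) [CommRing A] : Ideal A :=
  Ideal.span ({(p : A)} ∪ Set.range fun a : A => a - a ^ p ^ m)

private lemma Jsq (a : Zsqrtd (-5)) :
    a ^ 2 - a ∈ Ideal.span ({(2 : Zsqrtd (-5)), Zsqrtd.sqrtd - 1} : Set (Zsqrtd (-5))) := by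
  set J := Ideal.span ({(2 : Zsqrtd (-5)), Zsqrtd.sqrtd - 1} : Set (Zsqrtd (-5))) with hJ
  have h2 : (2 : Zsqrtd (-5)) ∈ J := Ideal.subset_span (Or.inl rfl)
  have hd : (Zsqrtd.sqrtd - 1 : Zsqrtd (-5)) ∈ J := Ideal.subset_span (Or.inr rfl)
  obtain ⟨k, hk⟩ : Even ((a.re + a.im - 1) * ((a.re + a.im - 1) + 1)) :=
    Int.even_mul_succ_self _
  have ha : a = (a.re : Zsqrtd (-5)) + Zsqrtd.sqrtd * (a.im : Zsqrtd (-5)) := by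
    nth_rewrite 1 [show a = ⟨a.re, a.im⟩ from rfl]
    exact Zsqrtd.decompose
  have hk' : ((a.re : Zsqrtd (-5)) + (a.im : Zsqrtd (-5))) ^ 2
      - ((a.re : Zsqrtd (-5)) + (a.im : Zsqrtd (-5))) = 2 * (k : Zsqrtd (-5)) := by
    have h : ((a.re + a.im) ^ 2 - (a.re + a.im) : ℤ) = 2 * k := by linear_combination hk
    have h2 := congrArg (fun z : ℤ => (z : Zsqrtd (-5))) h
    push_cast at h2
    linear_combination h2
  have key : a ^ 2 - a =
      (Zsqrtd.sqrtd - 1) * ((a.im : Zsqrtd (-5)) *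
          (a + ((a.re : Zsqrtd (-5)) + (a.im : Zsqrtd (-5)))) - (a.im : Zsqrtd (-5)))
        + 2 * (k : Zsqrtd (-5)) := by
    linear_combination (a + ((a.re : Zsqrtd (-5)) + Zsqrtd.sqrtd * (a.im : Zsqrtd (-5))) - 1
      - (Zsqrtd.sqrtd - 1) * (a.im : Zsqrtd (-5))) * ha + hk'
  rw [key]
  exact J.add_mem (J.mul_mem_right _ hd) (J.mul_mem_right _ h2)

theorem stmt14 (m : ℕ) (hm : 1 ≤ m) :
    Iideal 2 m (Zsqrtd (-5)) =
      Ideal.span {(2 : Zsqrtd (-5)), Zsqrtd.sqrtd - 1} ∧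
    ¬ (Iideal 2 m (Zsqrtd (-5))).IsPrincipal := by
  set A := Zsqrtd (-5)
  set J := Ideal.span ({(2 : A), Zsqrtd.sqrtd - 1} : Set A) with hJ
  have h2 : (2 : A) ∈ J := Ideal.subset_span (Or.inl rfl)
  have hd : (Zsqrtd.sqrtd - 1 : A) ∈ J := Ideal.subset_span (Or.inr rfl)
  have hpow : ∀ n : ℕ, ∀ a : A, a - a ^ 2 ^ n ∈ J := by
    intro n
    induction n with
    | zero => intro a; simpa using J.zero_mem
    | succ n ih =>
      intro a
      have h1 := ih a
      have h2' := Jsq (a ^ 2 ^ n)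
      have heq : a - a ^ 2 ^ (n + 1) = (a - a ^ 2 ^ n) - ((a ^ 2 ^ n) ^ 2 - a ^ 2 ^ n) := by
        rw [pow_succ, pow_mul]; ring
      rw [heq]
      exact J.sub_mem h1 h2'
  have hIJ : Iideal 2 m A = J := by
    apply le_antisymm
    · rw [Iideal, Ideal.span_le]
      rintro x (hx | ⟨a, rfl⟩)
      · simp only [Set.mem_singleton_iff] at hx
        rw [hx]; exact_mod_cast h2
      · exact hpow m a
    · have h2I : (2 : A) ∈ Iideal 2 m A := by
        apply Ideal.subset_span; left; norm_num
      have hdI : (Zsqrtd.sqrtd - 1 : A) ∈ Iideal 2 m A := by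
        obtain ⟨n, rfl⟩ : ∃ n, m = n + 1 := ⟨m - 1, by omega⟩
        have hmem : (Zsqrtd.sqrtd : A) - Zsqrtd.sqrtd ^ 2 ^ (n + 1) ∈ Iideal 2 (n+1) A := by
          apply Ideal.subset_span; right; exact ⟨Zsqrtd.sqrtd, rfl⟩
        have hpoweq : (Zsqrtd.sqrtd : A) ^ 2 ^ (n + 1) = ((-5 : ℤ) : A) ^ 2 ^ n := by
          rw [pow_succ, mul_comm, pow_mul, sq, Zsqrtd.dmuld]
        obtain ⟨c, hc⟩ : Even ((-5 : ℤ) ^ 2 ^ n - 1) := by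
          have hodd : Odd ((-5 : ℤ) ^ 2 ^ n) := Odd.pow (by decide)
          exact hodd.sub_odd odd_one
        have hc' : ((-5 : ℤ) : A) ^ 2 ^ n - 1 = 2 * (c : A) := by
          have h := congrArg (fun z : ℤ => (z : A)) hc
          push_cast at h ⊢
          linear_combination h + (Int.cast_pow (R := A) (-5 : ℤ) (2 ^ n)).symm
        have heq : (Zsqrtd.sqrtd : A) - 1 =
            ((Zsqrtd.sqrtd : A) - Zsqrtd.sqrtd ^ 2 ^ (n + 1)) + 2 * (c : A) := by
          rw [hpoweq, ← hc']; ring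
        rw [heq]
        exact (Iideal 2 (n+1) A).add_mem hmem ((Iideal 2 (n+1) A).mul_mem_right _ h2I)
      rw [hJ, Ideal.span_le]
      intro x hx
      rcases hx with rfl | hx
      · exact h2I
      · rw [Set.mem_singleton_iff] at hx; rw [hx]; exact hdI
  refine ⟨hIJ, ?_⟩
  rintro ⟨g, hg⟩
  rw [hIJ] at hg
  let φ : A →+* ZMod 2 := Zsqrtd.lift ⟨(1 : ZMod 2), by decide⟩
  have hφ2 : φ (2 : A) = 0 := by
    rw [map_ofNat]; decide
  have hφd : φ (Zsqrtd.sqrtd - 1 : A) = 0 := by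
    rw [map_sub, map_one]
    show (Zsqrtd.lift (d := -5) ⟨(1 : ZMod 2), by decide⟩) Zsqrtd.sqrtd - 1 = 0
    rw [Zsqrtd.lift_apply_apply]
    simp

  have hker : J ≤ RingHom.ker φ := by
    rw [hJ, Ideal.span_le]
    intro x hx
    rcases hx with rfl | hx
    · exact hφ2
    · rw [Set.mem_singleton_iff] at hx; rw [hx]; exact hφd
  have hJne : J ≠ ⊤ := by
    intro h
    have h1 : (1 : A) ∈ J := h ▸ Submodule.mem_top
    have := hker h1
    rw [RingHom.mem_ker, map_one] at this
    exact one_ne_zero this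
  have hg' : J = Ideal.span {g} := hg
  have hg2 : g ∣ (2 : A) := Ideal.mem_span_singleton.mp (hg' ▸ h2)
  have hgd : g ∣ (Zsqrtd.sqrtd - 1 : A) := Ideal.mem_span_singleton.mp (hg' ▸ hd)
  have hnorm : ∀ x y : A, x ∣ y → x.norm ∣ y.norm := by
    rintro x y ⟨c, rfl⟩
    rw [Zsqrtd.norm_mul]; exact dvd_mul_right _ _
  have hn2 : g.norm ∣ 4 := by
    have h := hnorm g 2 hg2
    have h4 : (2 : A).norm = 4 := by decide
    rwa [h4] at h
  have hnd : g.norm ∣ 6 := by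
    have h := hnorm g _ hgd
    have h6 : (Zsqrtd.sqrtd - 1 : A).norm = 6 := by decide
    rwa [h6] at h
  have hdvd2 : g.norm ∣ 2 := by
    have h := dvd_sub hnd hn2
    norm_num at h
    exact h
  have hpos : 0 ≤ g.norm := Zsqrtd.norm_nonneg (by norm_num) g
  have hle : g.norm ≤ 2 := Int.le_of_dvd (by norm_num) hdvd2
  have hne0 : g.norm ≠ 0 := by
    intro h; rw [h] at hdvd2; norm_num at hdvd2
  have h12 : g.norm = 1 ∨ g.norm = 2 := by
    
    omega
  rcases h12 with h | h
  · have hu : IsUnit g := (Zsqrtd.norm_eq_one_iff' (by norm_num) g).mp h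
    have htop : J = ⊤ := by rw [hg', Ideal.span_singleton_eq_top]; exact hu
    exact hJne htop
  · have h2' : g.re * g.re + 5 * (g.im * g.im) = 2 := by
      rw [Zsqrtd.norm_def] at h
      linarith
    have him : g.im = 0 := by
      by_contra hne
      have h1 : 1 ≤ g.im * g.im := by
        rcases lt_or_gt_of_ne hne with h' | h' <;> nlinarith
      nlinarith [mul_self_nonneg g.re]
    rw [him] at h2'
    simp at h2'
    have hb1 : g.re ≤ 1 := by nlinarith [sq_nonneg (g.re - 1)]
    have hb2 : -1 ≤ g.re := by nlinarith [sq_nonneg (g.re + 1)]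
    set r := g.re with hr
    interval_cases r <;> norm_num at h2'
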